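/- Suppose U is twice continuously differentiable. Then the repelling numerical step Φ⁺_ε is differentiable, and its Jacobian J = D Φ⁺_ε(z) at every z ∈ ℝᵈ × ℝᵈ satisfies the conformal-symplectic identity Jᵀ Ω⁻¹ J = e^{γ ε} Ω⁻¹, where Ω⁻¹ is the 2d×2d block matrix [[0, −I_d],[I_d, 0]]. -/

import Mathlib

open Matrix

noncomputable section

/-- Action of a matrix on a vector in Euclidean space. -/
def mvec {d : ℕ} (A : Matrix (Fin d) (Fin d) ℝ) (p : EuclideanSpace ℝ (Fin d)) :
    EuclideanSpace ℝ (Fin d) :=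
  WithLp.toLp 2 (A.mulVec p)

/-- The leapfrog step `P_ε` with potential `U` and inverse mass matrix `Sinv = Σ⁻¹`. -/
def leapfrog {d : ℕ} (U : EuclideanSpace ℝ (Fin d) → ℝ) (Sinv : Matrix (Fin d) (Fin d) ℝ)
    (ε : ℝ) (z : EuclideanSpace ℝ (Fin d) × EuclideanSpace ℝ (Fin d)) :
    EuclideanSpace ℝ (Fin d) × EuclideanSpace ℝ (Fin d) :=
  let phalf := z.2 - (ε / 2) • gradient U z.1
  let q' := z.1 + ε • mvec Sinv phalf
  (q', phalf - (ε / 2) • gradient U q')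

/-- The momentum-rescaling map `ξ_t(q, p) = (q, e^{γ t} p)`. -/
def xi {d : ℕ} (γ t : ℝ) (z : EuclideanSpace ℝ (Fin d) × EuclideanSpace ℝ (Fin d)) :
    EuclideanSpace ℝ (Fin d) × EuclideanSpace ℝ (Fin d) :=
  (z.1, Real.exp (γ * t) • z.2)

/-- The repelling numerical step `Φ⁺_ε = ξ_{ε/2} ∘ P_ε ∘ ξ_{ε/2}`. -/
def stepPlus {d : ℕ} (U : EuclideanSpace ℝ (Fin d) → ℝ) (Sinv : Matrix (Fin d) (Fin d) ℝ)
    (γ ε : ℝ) :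
    EuclideanSpace ℝ (Fin d) × EuclideanSpace ℝ (Fin d) →
      EuclideanSpace ℝ (Fin d) × EuclideanSpace ℝ (Fin d) :=
  xi γ (ε / 2) ∘ leapfrog U Sinv ε ∘ xi γ (ε / 2)

/-- The attracting numerical step `Φ⁻_ε = ξ_{−ε/2} ∘ P_ε ∘ ξ_{−ε/2}`. -/
def stepMinus {d : ℕ} (U : EuclideanSpace ℝ (Fin d) → ℝ) (Sinv : Matrix (Fin d) (Fin d) ℝ)
    (γ ε : ℝ) :
    EuclideanSpace ℝ (Fin d) × EuclideanSpace ℝ (Fin d) →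
      EuclideanSpace ℝ (Fin d) × EuclideanSpace ℝ (Fin d) :=
  xi γ (-(ε / 2)) ∘ leapfrog U Sinv ε ∘ xi γ (-(ε / 2))


/-- The product basis of the standard bases on `ℝᵈ × ℝᵈ`, indexed by `Fin d ⊕ Fin d`. -/
def phaseBasis (d : ℕ) :
    Module.Basis (Fin d ⊕ Fin d) ℝ (EuclideanSpace ℝ (Fin d) × EuclideanSpace ℝ (Fin d)) :=
  (PiLp.basisFun 2 ℝ (Fin d)).prod (PiLp.basisFun 2 ℝ (Fin d))

/-- The Jacobian matrix of a map on phase space at a point, in the standard basis. -/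
def Jmat {d : ℕ}
    (Φ : EuclideanSpace ℝ (Fin d) × EuclideanSpace ℝ (Fin d) →
      EuclideanSpace ℝ (Fin d) × EuclideanSpace ℝ (Fin d))
    (z : EuclideanSpace ℝ (Fin d) × EuclideanSpace ℝ (Fin d)) :
    Matrix (Fin d ⊕ Fin d) (Fin d ⊕ Fin d) ℝ :=
  LinearMap.toMatrix (phaseBasis d) (phaseBasis d) (fderiv ℝ Φ z).toLinearMap

/-- The block matrix `Ω⁻¹ = [[0, −I_d], [I_d, 0]]`. -/
def Ωinv (d : ℕ) : Matrix (Fin d ⊕ Fin d) (Fin d ⊕ Fin d) ℝ :=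
  Matrix.fromBlocks 0 (-1) 1 0


/-! ### Auxiliary material for the proof -/

namespace CSAux

variable {d : ℕ}

abbrev Evec (d : ℕ) := EuclideanSpace ℝ (Fin d)

noncomputable def eb (d : ℕ) : Module.Basis (Fin d) ℝ (Evec d) := PiLp.basisFun 2 ℝ (Fin d)

noncomputable def blockLin (a b c e : Evec d →ₗ[ℝ] Evec d) :
    (Evec d × Evec d) →ₗ[ℝ] (Evec d × Evec d) :=
  LinearMap.prod (a.comp (LinearMap.fst ℝ _ _) + b.comp (LinearMap.snd ℝ _ _))
    (c.comp (LinearMap.fst ℝ _ _) + e.comp (LinearMap.snd ℝ _ _))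

@[simp] lemma blockLin_apply (a b c e : Evec d →ₗ[ℝ] Evec d) (z : Evec d × Evec d) :
    blockLin a b c e z = (a z.1 + b z.2, c z.1 + e z.2) := rfl

lemma toMatrix_blockLin (a b c e : Evec d →ₗ[ℝ] Evec d) :
    LinearMap.toMatrix (phaseBasis d) (phaseBasis d) (blockLin a b c e) =
      Matrix.fromBlocks (LinearMap.toMatrix (eb d) (eb d) a) (LinearMap.toMatrix (eb d) (eb d) b)
        (LinearMap.toMatrix (eb d) (eb d) c) (LinearMap.toMatrix (eb d) (eb d) e) := by
  ext i j
  cases i <;> cases j <;>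
    simp [LinearMap.toMatrix_apply, phaseBasis, eb, Module.Basis.prod_apply, Module.Basis.prod_repr_inl,
      Module.Basis.prod_repr_inr, Matrix.fromBlocks]

noncomputable def mvecLin (A : Matrix (Fin d) (Fin d) ℝ) : Evec d →ₗ[ℝ] Evec d where
  toFun := mvec A
  map_add' x y := by simp [mvec, Matrix.mulVec_add]
  map_smul' c x := by simp [mvec, Matrix.mulVec_smul]

@[simp] lemma mvecLin_apply (A : Matrix (Fin d) (Fin d) ℝ) (p : Evec d) :
    mvecLin A p = mvec A p := rfl

lemma toMatrix_mvecLin (A : Matrix (Fin d) (Fin d) ℝ) :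
    LinearMap.toMatrix (eb d) (eb d) (mvecLin A) = A := by
  ext i j
  simp only [LinearMap.toMatrix_apply, eb, PiLp.basisFun_apply, PiLp.basisFun_repr]
  show (A.mulVec (Pi.single j 1)) i = A i j
  simp [Matrix.mulVec_single]

lemma conf_mul {M N : Matrix (Fin d ⊕ Fin d) (Fin d ⊕ Fin d) ℝ} {a b : ℝ}
    (hM : Mᵀ * Ωinv d * M = a • Ωinv d) (hN : Nᵀ * Ωinv d * N = b • Ωinv d) :
    (M * N)ᵀ * Ωinv d * (M * N) = (a * b) • Ωinv d := by
  have h : (M * N)ᵀ * Ωinv d * (M * N) = Nᵀ * (Mᵀ * Ωinv d * M) * N := by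
    rw [Matrix.transpose_mul]; simp only [Matrix.mul_assoc]
  rw [h, hM, Matrix.mul_smul, Matrix.smul_mul, hN, smul_smul]

lemma conf_diag (c : ℝ) :
    (Matrix.fromBlocks 1 0 0 (c • 1) : Matrix (Fin d ⊕ Fin d) (Fin d ⊕ Fin d) ℝ)ᵀ * Ωinv d *
      Matrix.fromBlocks 1 0 0 (c • 1) = c • Ωinv d := by
  simp [Ωinv, Matrix.fromBlocks_transpose, Matrix.fromBlocks_multiply, Matrix.fromBlocks_smul,
    Matrix.smul_mul, Matrix.mul_smul, Matrix.transpose_smul]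

lemma conf_lower (A : Matrix (Fin d) (Fin d) ℝ) (hA : Aᵀ = A) :
    (Matrix.fromBlocks 1 0 A 1 : Matrix (Fin d ⊕ Fin d) (Fin d ⊕ Fin d) ℝ)ᵀ * Ωinv d *
      Matrix.fromBlocks 1 0 A 1 = (1 : ℝ) • Ωinv d := by
  simp [Ωinv, Matrix.fromBlocks_transpose, Matrix.fromBlocks_multiply, hA]

lemma conf_upper (B : Matrix (Fin d) (Fin d) ℝ) (hB : Bᵀ = B) :
    (Matrix.fromBlocks 1 B 0 1 : Matrix (Fin d ⊕ Fin d) (Fin d ⊕ Fin d) ℝ)ᵀ * Ωinv d *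
      Matrix.fromBlocks 1 B 0 1 = (1 : ℝ) • Ωinv d := by
  simp [Ωinv, Matrix.fromBlocks_transpose, Matrix.fromBlocks_multiply, hB]

/-! #### Gradient and Hessian -/

lemma grad_contDiff {U : Evec d → ℝ} (hU : ContDiff ℝ 2 U) : ContDiff ℝ 1 (gradient U) := by
  have hfd : ContDiff ℝ 1 (fderiv ℝ U) := hU.fderiv_right (m := 1) (by norm_num)
  have h : gradient U = fun x => (InnerProductSpace.toDual ℝ (Evec d)).symm (fderiv ℝ U x) := rfl
  rw [h]
  exact ((InnerProductSpace.toDual ℝ (Evec d)).symm.contDiff).comp hfd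

lemma hess_inner_symm {U : Evec d → ℝ} (hU : ContDiff ℝ 2 U) (x : Evec d) (v w : Evec d) :
    (inner ℝ (fderiv ℝ (gradient U) x v) w : ℝ) = inner ℝ (fderiv ℝ (gradient U) x w) v := by
  have hgrad : Differentiable ℝ (gradient U) := (grad_contDiff hU).differentiable one_ne_zero
  set A : Evec d →L[ℝ] (Evec d →L[ℝ] ℝ) :=
    (InnerProductSpace.toDual ℝ (Evec d)).toContinuousLinearEquiv.toContinuousLinearMap with hA
  have key : HasFDerivAt (fderiv ℝ U) (A.comp (fderiv ℝ (gradient U) x)) x := by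
    have h1 : fderiv ℝ U = fun y => A (gradient U y) := by
      funext y
      show fderiv ℝ U y = InnerProductSpace.toDual ℝ (Evec d) (gradient U y)
      rw [gradient, LinearIsometryEquiv.apply_symm_apply]
    rw [h1]
    exact A.hasFDerivAt.comp x (hgrad x).hasFDerivAt
  have hsymm := hU.contDiffAt.isSymmSndFDerivAt (x := x) (by simp)
  have h2 := hsymm v w
  rw [key.fderiv] at h2
  simpa [A, InnerProductSpace.toDual_apply_apply] using h2

/-- The Hessian of `U` at `x` as a matrix. -/
noncomputable def Hmat (U : Evec d → ℝ) (x : Evec d) : Matrix (Fin d) (Fin d) ℝ :=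
  LinearMap.toMatrix (eb d) (eb d) (fderiv ℝ (gradient U) x).toLinearMap

lemma Hmat_symm {U : Evec d → ℝ} (hU : ContDiff ℝ 2 U) (x : Evec d) :
    (Hmat U x)ᵀ = Hmat U x := by
  have hsingle : ∀ k : Fin d, (PiLp.basisFun 2 ℝ (Fin d)) k = EuclideanSpace.single k (1 : ℝ) := by
    intro k; rw [PiLp.basisFun_apply]
  ext i j
  have h := hess_inner_symm hU x (EuclideanSpace.single i (1 : ℝ))
    (EuclideanSpace.single j (1 : ℝ))
  simp only [EuclideanSpace.inner_single_right, starRingEnd_apply, star_trivial, one_mul] at h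
  simp only [Matrix.transpose_apply, Hmat, LinearMap.toMatrix_apply, eb, PiLp.basisFun_repr,
    ContinuousLinearMap.coe_coe, hsingle]
  exact h

/-! #### The elementary maps and their Jacobians -/

noncomputable def kick (U : Evec d → ℝ) (a : ℝ) (z : Evec d × Evec d) : Evec d × Evec d :=
  (z.1, z.2 - a • gradient U z.1)

noncomputable def drift (Sinv : Matrix (Fin d) (Fin d) ℝ) (ε : ℝ) (z : Evec d × Evec d) :
    Evec d × Evec d :=
  (z.1 + ε • mvec Sinv z.2, z.2)

lemma leapfrog_factor (U : Evec d → ℝ) (Sinv : Matrix (Fin d) (Fin d) ℝ) (ε : ℝ) :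
    leapfrog U Sinv ε = kick U (ε / 2) ∘ (drift Sinv ε ∘ kick U (ε / 2)) := rfl

noncomputable def xiCLM (c : ℝ) : (Evec d × Evec d) →L[ℝ] (Evec d × Evec d) :=
  (ContinuousLinearMap.fst ℝ (Evec d) (Evec d)).prod
    (c • ContinuousLinearMap.snd ℝ (Evec d) (Evec d))

lemma xi_eq (γ t : ℝ) : (xi γ t : Evec d × Evec d → Evec d × Evec d) =
    ⇑(xiCLM (Real.exp (γ * t))) := rfl

noncomputable def driftCLM (Sinv : Matrix (Fin d) (Fin d) ℝ) (ε : ℝ) :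
    (Evec d × Evec d) →L[ℝ] (Evec d × Evec d) :=
  LinearMap.toContinuousLinearMap (blockLin LinearMap.id (ε • mvecLin Sinv) 0 LinearMap.id)

lemma drift_eq (Sinv : Matrix (Fin d) (Fin d) ℝ) (ε : ℝ) :
    (drift Sinv ε : Evec d × Evec d → Evec d × Evec d) = ⇑(driftCLM Sinv ε) := by
  funext z
  show drift Sinv ε z = blockLin LinearMap.id (ε • mvecLin Sinv) 0 LinearMap.id z
  simp [drift, blockLin_apply]

noncomputable def kickCLM (a : ℝ) (H : Evec d →L[ℝ] Evec d) :
    (Evec d × Evec d) →L[ℝ] (Evec d × Evec d) :=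
  (ContinuousLinearMap.fst ℝ (Evec d) (Evec d)).prod
    (ContinuousLinearMap.snd ℝ (Evec d) (Evec d) -
      a • (H.comp (ContinuousLinearMap.fst ℝ (Evec d) (Evec d))))

lemma kick_hasFDerivAt {U : Evec d → ℝ} (hU : ContDiff ℝ 2 U) (a : ℝ) (z : Evec d × Evec d) :
    HasFDerivAt (kick U a) (kickCLM a (fderiv ℝ (gradient U) z.1)) z := by
  have hgrad : Differentiable ℝ (gradient U) := (grad_contDiff hU).differentiable one_ne_zero
  exact HasFDerivAt.prodMk hasFDerivAt_fst
    (HasFDerivAt.sub hasFDerivAt_snd (((hgrad z.1).hasFDerivAt.comp z hasFDerivAt_fst).const_smul a))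

lemma kick_differentiable {U : Evec d → ℝ} (hU : ContDiff ℝ 2 U) (a : ℝ) :
    Differentiable ℝ (kick U a : Evec d × Evec d → Evec d × Evec d) :=
  fun z => (kick_hasFDerivAt hU a z).differentiableAt

/-! #### Jacobian computations -/

lemma Jmat_comp (f g : Evec d × Evec d → Evec d × Evec d) (z : Evec d × Evec d)
    (hf : DifferentiableAt ℝ f (g z)) (hg : DifferentiableAt ℝ g z) :
    Jmat (f ∘ g) z = Jmat f (g z) * Jmat g z := by
  rw [Jmat, Jmat, Jmat, fderiv_comp (x := z) hf hg, ContinuousLinearMap.toLinearMap_comp,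
    LinearMap.toMatrix_comp _ (phaseBasis d)]

lemma Jmat_clm (L : (Evec d × Evec d) →L[ℝ] (Evec d × Evec d)) (z : Evec d × Evec d) :
    Jmat (⇑L) z = LinearMap.toMatrix (phaseBasis d) (phaseBasis d) L.toLinearMap := by
  rw [Jmat, L.fderiv]

lemma Jmat_xi (γ t : ℝ) (z : Evec d × Evec d) :
    Jmat (xi γ t : Evec d × Evec d → Evec d × Evec d) z =
      Matrix.fromBlocks 1 0 0 (Real.exp (γ * t) • 1) := by
  rw [xi_eq, Jmat_clm]
  have h : (xiCLM (Real.exp (γ * t)) : (Evec d × Evec d) →L[ℝ] _).toLinearMap =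
      blockLin LinearMap.id 0 0 (Real.exp (γ * t) • LinearMap.id) := by
    apply LinearMap.ext; intro z; apply Prod.ext <;> simp [xiCLM, blockLin_apply]
  rw [h, toMatrix_blockLin]
  simp [LinearMap.toMatrix_id, _root_.map_smul]

lemma Jmat_drift (Sinv : Matrix (Fin d) (Fin d) ℝ) (ε : ℝ) (z : Evec d × Evec d) :
    Jmat (drift Sinv ε : Evec d × Evec d → Evec d × Evec d) z =
      Matrix.fromBlocks 1 (ε • Sinv) 0 1 := by
  rw [drift_eq, Jmat_clm]
  rw [show (driftCLM Sinv ε : (Evec d × Evec d) →L[ℝ] _).toLinearMap =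
      blockLin LinearMap.id (ε • mvecLin Sinv) 0 LinearMap.id from
    LinearMap.coe_toContinuousLinearMap _, toMatrix_blockLin]
  simp [LinearMap.toMatrix_id, _root_.map_smul, toMatrix_mvecLin]

lemma Jmat_kick {U : Evec d → ℝ} (hU : ContDiff ℝ 2 U) (a : ℝ) (z : Evec d × Evec d) :
    Jmat (kick U a : Evec d × Evec d → Evec d × Evec d) z =
      Matrix.fromBlocks 1 0 ((-a) • Hmat U z.1) 1 := by
  rw [Jmat, (kick_hasFDerivAt hU a z).fderiv]
  have h : (kickCLM a (fderiv ℝ (gradient U) z.1) : (Evec d × Evec d) →L[ℝ] _).toLinearMap =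
      blockLin LinearMap.id 0 ((-a) • (fderiv ℝ (gradient U) z.1).toLinearMap) LinearMap.id := by
    apply LinearMap.ext; intro w; apply Prod.ext <;>
      simp [kickCLM, blockLin_apply, sub_eq_add_neg, add_comm, neg_smul]
  rw [h, toMatrix_blockLin]
  simp only [LinearMap.toMatrix_id, _root_.map_smul, map_zero]
  rfl

end CSAux

/-- For `U` twice continuously differentiable, the repelling numerical
step `Φ⁺_ε` is differentiable and its Jacobian `J = DΦ⁺_ε(z)` satisfies the
conformal-symplectic identity `Jᵀ Ω⁻¹ J = e^{γ ε} Ω⁻¹` at every `z`. -/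
theorem stepPlus_conformally_symplectic
    (d : ℕ) (hd : 1 ≤ d) (ε : ℝ) (hε : 0 < ε) (γ : ℝ) (hγ : 0 < γ)
    (U : EuclideanSpace ℝ (Fin d) → ℝ) (hU : ContDiff ℝ 2 U)
    (S : Matrix (Fin d) (Fin d) ℝ) (hSsymm : S.IsSymm) (hSpd : S.PosDef) :
    Differentiable ℝ (stepPlus U S⁻¹ γ ε) ∧
      ∀ z : EuclideanSpace ℝ (Fin d) × EuclideanSpace ℝ (Fin d),
        (Jmat (stepPlus U S⁻¹ γ ε) z)ᵀ * Ωinv d * Jmat (stepPlus U S⁻¹ γ ε) z =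
          Real.exp (γ * ε) • Ωinv d :=by
  classical
  have hSinv : (S⁻¹)ᵀ = S⁻¹ := by
    rw [Matrix.transpose_nonsing_inv, Matrix.IsSymm.eq hSsymm]
  have hgrad : Differentiable ℝ (gradient U) := (CSAux.grad_contDiff hU).differentiable one_ne_zero
  have hxidiff : ∀ γ' t : ℝ, Differentiable ℝ
      (xi γ' t : EuclideanSpace ℝ (Fin d) × EuclideanSpace ℝ (Fin d) → _) := by
    intro γ' t
    rw [CSAux.xi_eq]
    exact (CSAux.xiCLM (Real.exp (γ' * t))).differentiable
  have hdriftdiff : Differentiable ℝ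
      (CSAux.drift S⁻¹ ε : EuclideanSpace ℝ (Fin d) × EuclideanSpace ℝ (Fin d) → _) := by
    rw [CSAux.drift_eq]
    exact (CSAux.driftCLM S⁻¹ ε).differentiable
  have hkickdiff := CSAux.kick_differentiable (d := d) hU (ε / 2)
  have hstep : stepPlus U S⁻¹ γ ε =
      xi γ (ε / 2) ∘ (CSAux.kick U (ε / 2) ∘ (CSAux.drift S⁻¹ ε ∘
        (CSAux.kick U (ε / 2) ∘ xi γ (ε / 2)))) := rfl
  constructor
  · rw [hstep]
    exact ((hxidiff γ (ε / 2)).comp (hkickdiff.comp (hdriftdiff.comp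
      (hkickdiff.comp (hxidiff γ (ε / 2))))))
  · intro z
    rw [hstep]
    rw [CSAux.Jmat_comp _ _ z (hxidiff γ (ε / 2) _)
        ((hkickdiff.comp (hdriftdiff.comp (hkickdiff.comp (hxidiff γ (ε / 2))))) z)]
    rw [CSAux.Jmat_comp _ _ _ (hkickdiff _)
        ((hdriftdiff.comp (hkickdiff.comp (hxidiff γ (ε / 2)))) _)]
    rw [CSAux.Jmat_comp _ _ _ (hdriftdiff _) ((hkickdiff.comp (hxidiff γ (ε / 2))) _)]
    rw [CSAux.Jmat_comp _ _ _ (hkickdiff _) (hxidiff γ (ε / 2) _)]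
    rw [CSAux.Jmat_xi, CSAux.Jmat_xi, CSAux.Jmat_drift,
      CSAux.Jmat_kick hU, CSAux.Jmat_kick hU]
    simp only [Function.comp_apply]
    have hH1 : ((-(ε / 2)) • CSAux.Hmat U (CSAux.drift S⁻¹ ε (CSAux.kick U (ε / 2)
        (xi γ (ε / 2) z))).1)ᵀ = (-(ε / 2)) • CSAux.Hmat U (CSAux.drift S⁻¹ ε
        (CSAux.kick U (ε / 2) (xi γ (ε / 2) z))).1 := by
      rw [Matrix.transpose_smul, CSAux.Hmat_symm hU]
    have hH2 : ((-(ε / 2)) • CSAux.Hmat U (xi γ (ε / 2) z).1)ᵀ =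
        (-(ε / 2)) • CSAux.Hmat U (xi γ (ε / 2) z).1 := by
      rw [Matrix.transpose_smul, CSAux.Hmat_symm hU]
    have hB : (ε • S⁻¹)ᵀ = ε • S⁻¹ := by rw [Matrix.transpose_smul, hSinv]
    have hconf := CSAux.conf_mul (CSAux.conf_diag (Real.exp (γ * (ε / 2))))
      (CSAux.conf_mul (CSAux.conf_lower _ hH1)
        (CSAux.conf_mul (CSAux.conf_upper _ hB)
          (CSAux.conf_mul (CSAux.conf_lower _ hH2)
            (CSAux.conf_diag (Real.exp (γ * (ε / 2)))))))
    rw [hconf]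
    congr 1
    rw [one_mul, one_mul, one_mul, ← Real.exp_add]
    ring_nf
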